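/- Fix a parameter m ≥ 1 and an admissible pairwise-overlapping assignment matrix H such that every cluster is nonempty (for each i there exists j with h_{ij} = 1). Define, for each i, α_i* = (Σ_{j=1}^N x_j · h_{ij}/(Σ_{t=1}^k h_{tj})^m) / (Σ_{j=1}^N h_{ij}/(Σ_{t=1}^k h_{tj})^m). Then A* = (α_1*,…,α_k*) minimizes the objective for this H: J(H; A*) ≤ J(H; A) for every A = (α_1,…,α_k) ∈ (ℝⁿ)^k. -/

import Mathlib

open Finset

/-- A pairwise-overlapping assignment matrix: 0/1 entries, each column summing
to 1 or 2. -/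
def IsPairwiseAssignment {k N : ℕ} (h : Fin k → Fin N → ℝ) : Prop :=
  (∀ i j, h i j = 0 ∨ h i j = 1) ∧
    (∀ j, 1 ≤ ∑ i, h i j) ∧ (∀ j, (∑ i, h i j) ≤ 2)

/-- The objective `J(H;A)` of the pairwise overlapping k-means problem. -/
noncomputable def Jobj {n k N : ℕ} (m : ℝ) (x : Fin N → EuclideanSpace ℝ (Fin n))
    (h : Fin k → Fin N → ℝ) (A : Fin k → EuclideanSpace ℝ (Fin n)) : ℝ :=
  ∑ j, (∑ i, ‖x j - A i‖ ^ 2 * h i j) / (∑ i, h i j) ^ m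

lemma centroid_min {E : Type*} [NormedAddCommGroup E] [InnerProductSpace ℝ E]
    {N : ℕ} (w : Fin N → ℝ) (hw : ∀ j, 0 ≤ w j) (hW : 0 < ∑ j, w j)
    (x : Fin N → E) (a : E) :
    ∑ j, w j * ‖x j - (∑ j, w j)⁻¹ • ∑ j, w j • x j‖ ^ 2 ≤
      ∑ j, w j * ‖x j - a‖ ^ 2 := by
  set W := ∑ j, w j with hWdef
  set c : E := W⁻¹ • ∑ j, w j • x j with hc
  have hsum : ∑ j, w j • (x j - c) = 0 := by
    simp only [smul_sub, Finset.sum_sub_distrib]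
    rw [← Finset.sum_smul, hc, smul_smul, mul_inv_cancel₀ hW.ne', one_smul, sub_self]
  have h0 : (inner ℝ (∑ j, w j • (x j - c)) (c - a) : ℝ) = 0 := by
    rw [hsum]; simp
  rw [sum_inner] at h0
  simp only [real_inner_smul_left] at h0
  have hexp : ∀ j, ‖x j - a‖ ^ 2
      = ‖x j - c‖ ^ 2 + 2 * inner ℝ (x j - c) (c - a) + ‖c - a‖ ^ 2 := by
    intro j
    have hxa : x j - a = (x j - c) + (c - a) := by abel
    rw [hxa, norm_add_sq_real]
  have key : ∑ j, w j * ‖x j - a‖ ^ 2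
      = (∑ j, w j * ‖x j - c‖ ^ 2)
        + 2 * (∑ j, w j * inner ℝ (x j - c) (c - a))
        + W * ‖c - a‖ ^ 2 := by
    have hterm : ∀ j, w j * ‖x j - a‖ ^ 2
        = w j * ‖x j - c‖ ^ 2 + 2 * (w j * inner ℝ (x j - c) (c - a))
          + w j * ‖c - a‖ ^ 2 := fun j => by rw [hexp j]; ring
    simp only [hterm]
    rw [Finset.sum_add_distrib, Finset.sum_add_distrib, ← Finset.mul_sum,
      ← Finset.sum_mul]
  rw [key, h0]
  have : 0 ≤ W * ‖c - a‖ ^ 2 := mul_nonneg hW.le (sq_nonneg _)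
  linarith

theorem update_step_optimal (n k N : ℕ) (m : ℝ) (hm : 1 ≤ m)
    (x : Fin N → EuclideanSpace ℝ (Fin n)) (h : Fin k → Fin N → ℝ)
    (hH : IsPairwiseAssignment h) (hne : ∀ i, ∃ j, h i j = 1)
    (Astar : Fin k → EuclideanSpace ℝ (Fin n))
    (hAstar : ∀ i, Astar i =
      (∑ j, (h i j / (∑ t, h t j) ^ m))⁻¹ •
        ∑ j, (h i j / (∑ t, h t j) ^ m) • x j) :
    ∀ A : Fin k → EuclideanSpace ℝ (Fin n), Jobj m x h Astar ≤ Jobj m x h A := by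
  obtain ⟨h01, hlo, hhi⟩ := hH
  intro A
  have hSpos : ∀ j, (0:ℝ) < (∑ t, h t j) ^ m :=
    fun j => Real.rpow_pos_of_pos (lt_of_lt_of_le one_pos (hlo j)) m
  have hwnn : ∀ i j, 0 ≤ h i j / (∑ t, h t j) ^ m := by
    intro i j
    rcases h01 i j with h0 | h1
    · rw [h0]; simp
    · rw [h1]; exact le_of_lt (div_pos one_pos (hSpos j))
  have hJ : ∀ B : Fin k → EuclideanSpace ℝ (Fin n),
      Jobj m x h B = ∑ i, ∑ j, (h i j / (∑ t, h t j) ^ m) * ‖x j - B i‖ ^ 2 := by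
    intro B
    simp only [Jobj, Finset.sum_div]
    rw [Finset.sum_comm]
    exact Finset.sum_congr rfl fun i _ => Finset.sum_congr rfl fun j _ => by ring
  rw [hJ, hJ]
  refine Finset.sum_le_sum fun i _ => ?_
  have hWpos : 0 < ∑ j, h i j / (∑ t, h t j) ^ m := by
    obtain ⟨j0, hj0⟩ := hne i
    refine Finset.sum_pos' (fun j _ => hwnn i j) ⟨j0, Finset.mem_univ _, ?_⟩
    rw [hj0]; exact div_pos one_pos (hSpos j0)
  rw [hAstar i]
  exact centroid_min _ (hwnn i) hWpos x (A i)
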